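/- arXiv:1009.2009 — 5 statements merged into one kernel-verified Lean document; each statement's English description precedes it below -/
import Mathlib

section
/- The forward mass of the semi-Markov model satisfies the following recursion: for every j with 1 ≤ j ≤ T and every s ∈ S, α_j(s) = Σ_{i=2}^{j} Σ_{s' ∈ S} α_{i-1}(s') · A(s',s,i-1) · R(s,i,j) + R(s,1,j), where the sum over i is empty when j = 1. -/
/-- A segmentation of an interval is encoded as a nonempty list of pairs
(state, positive segment length).  `segPhi R A t0 ζ` is the joint potential of
the segmentation `ζ` of an interval starting at time `t0 + 1`: the product of
the segment potentials `R s (t_{k-1}+1) t_k` over all segments and of the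
transition potentials `A s_k s_{k+1} t_k` over consecutive segments. -/
noncomputable def segPhi {S : Type*} (R : S → ℕ → ℕ → ℝ) (A : S → S → ℕ → ℝ) :
    ℕ → List (S × ℕ) → ℝ
  | _, [] => 1
  | t0, [(s, l)] => R s (t0 + 1) (t0 + l)
  | t0, (s, l) :: (s', l') :: rest =>
      R s (t0 + 1) (t0 + l) * A s s' (t0 + l) *
        segPhi R A (t0 + l) ((s', l') :: rest)

/-- `IsSegmentation a b ζ` : the list `ζ` of (state, length) pairs is a
segmentation of the interval `[a, b]`: it is nonempty, all segment lengths are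
positive, and the lengths sum to `b - a + 1`. -/
def IsSegmentation {S : Type*} (a b : ℕ) (ζ : List (S × ℕ)) : Prop :=
  ζ ≠ [] ∧ (∀ p ∈ ζ, 0 < p.2) ∧ (ζ.map Prod.snd).sum = b + 1 - a

/-- The forward mass `α_j(s)` of the semi-Markov model: the sum of the joint
potentials of all segmentations of `[1, j]` whose last segment has state `s`. -/
noncomputable def fwdMass {S : Type*} (R : S → ℕ → ℕ → ℝ) (A : S → S → ℕ → ℝ)
    (j : ℕ) (s : S) : ℝ :=
  ∑ᶠ ζ ∈ {ζ : List (S × ℕ) |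
      IsSegmentation 1 j ζ ∧ Option.map Prod.fst ζ.getLast? = some s},
    segPhi R A 0 ζ

lemma segPhi_append {S : Type*} (R : S → ℕ → ℕ → ℝ) (A : S → S → ℕ → ℝ) :
    ∀ (ζ : List (S × ℕ)) (t0 : ℕ) (p : S × ℕ) (s : S) (l : ℕ),
      ζ.getLast? = some p →
      segPhi R A t0 (ζ ++ [(s, l)]) =
        segPhi R A t0 ζ * A p.1 s (t0 + (ζ.map Prod.snd).sum) *
          R s (t0 + (ζ.map Prod.snd).sum + 1) (t0 + (ζ.map Prod.snd).sum + l)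
  | [], _, _, _, _, h => by simp at h
  | [(a, b)], t0, p, s, l, h => by
      simp only [List.getLast?_singleton, Option.some_inj] at h
      subst h
      simp [segPhi, add_assoc]
  | (a, b) :: (c, d) :: rest, t0, p, s, l, h => by
      have hlast : ((c, d) :: rest).getLast? = some p := by
        rw [← h]; simp [List.getLast?_cons_cons]
      have ih := segPhi_append R A ((c, d) :: rest) (t0 + b) p s l hlast
      simp only [List.cons_append, segPhi] at *
      rw [ih]
      simp only [List.map_cons, List.sum_cons]
      ring_nf

lemma seg_len_le_sum : ∀ l : List ℕ, (∀ x ∈ l, 0 < x) → l.length ≤ l.sum := by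
  intro l hl
  induction l with
  | nil => simp
  | cons a t ih =>
    simp only [List.length_cons, List.sum_cons]
    have ha := hl a (by simp)
    have := ih (fun x hx => hl x (List.mem_cons_of_mem _ hx))
    omega

lemma seg_finite {S : Type*} [Fintype S] (n : ℕ) (t : S) :
    {ζ : List (S × ℕ) | IsSegmentation 1 n ζ ∧
      Option.map Prod.fst ζ.getLast? = some t}.Finite := by
  have hK : {l : List (S × Fin (n + 1)) | l.length ≤ n}.Finite :=
    List.finite_length_le _ n
  apply Set.Finite.subset (hK.image (List.map (fun p => (p.1, (p.2 : ℕ)))))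
  rintro ζ ⟨⟨hne, hpos, hsum⟩, -⟩
  have hsum' : (ζ.map Prod.snd).sum = n := by simpa using hsum
  have hmem : ∀ p ∈ ζ, p.2 ≤ n := by
    intro p hp
    have : p.2 ≤ (ζ.map Prod.snd).sum :=
      List.single_le_sum (by simp) _ (List.mem_map_of_mem hp)
    omega
  refine ⟨ζ.map (fun p => (p.1, (⟨min p.2 n, by omega⟩ : Fin (n + 1)))), ?_, ?_⟩
  · simp only [Set.mem_setOf_eq, List.length_map]
    calc ζ.length = (ζ.map Prod.snd).length := by simp
      _ ≤ (ζ.map Prod.snd).sum := seg_len_le_sum _ (by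
          intro x hx
          obtain ⟨p, hp, rfl⟩ := List.mem_map.1 hx
          exact hpos p hp)
      _ = n := hsum'
  · rw [List.map_map]
    conv_rhs => rw [← List.map_id ζ]
    refine List.map_congr_left fun p hp => ?_
    simp [Function.comp, min_eq_left (hmem p hp)]


/-- Forward recursion for the semi-Markov model: for `1 ≤ j ≤ T` and `s ∈ S`,
`α_j(s) = Σ_{i=2}^{j} Σ_{s'} α_{i-1}(s') · A(s',s,i-1) · R(s,i,j) + R(s,1,j)`. -/
theorem semiCRF_forward_recursion {S : Type*} [Fintype S] [Nonempty S]
    (T : ℕ) (hT : 1 ≤ T)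
    (R : S → ℕ → ℕ → ℝ) (A : S → S → ℕ → ℝ)
    (j : ℕ) (hj1 : 1 ≤ j) (hjT : j ≤ T) (s : S) :
    fwdMass R A j s =
      (∑ i ∈ Finset.Icc 2 j, ∑ s' : S,
          fwdMass R A (i - 1) s' * A s' s (i - 1) * R s i j)
        + R s 1 j := by
  classical
  have hfw : ∀ (n : ℕ) (t : S),
      fwdMass R A n t = ∑ ζ ∈ (seg_finite n t).toFinset, segPhi R A 0 ζ :=
    fun n t => finsum_mem_eq_finite_toFinset_sum _ _
  set e : ℕ → List (S × ℕ) → List (S × ℕ) :=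
    fun i ζ' => ζ' ++ [(s, j + 1 - i)] with he
  -- sum of segment lengths for elements of the segmentation sets
  have hsum_of : ∀ (n : ℕ) (t : S) (ζ : List (S × ℕ)),
      ζ ∈ (seg_finite n t).toFinset → (ζ.map Prod.snd).sum = n := by
    intro n t ζ hζ
    rw [Set.Finite.mem_toFinset] at hζ
    have := hζ.1.2.2
    omega
  -- decomposition of the segmentation set
  have key : (seg_finite j s).toFinset =
      insert [(s, j)] ((Finset.Icc 2 j ×ˢ (Finset.univ : Finset S)).biUnion
        (fun p => ((seg_finite (p.1 - 1) p.2).toFinset).image (e p.1))) := by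
    ext ζ
    simp only [Set.Finite.mem_toFinset, Set.mem_setOf_eq, Finset.mem_insert,
      Finset.mem_biUnion, Finset.mem_product, Finset.mem_image, Finset.mem_Icc,
      Finset.mem_univ, and_true, Prod.exists]
    constructor
    · rintro ⟨⟨hne, hpos, hsum⟩, hlast⟩
      have hsumj : (ζ.map Prod.snd).sum = j := by simpa using hsum
      set q := ζ.getLast hne with hq
      have hql : ζ.dropLast ++ [q] = ζ := List.dropLast_append_getLast hne
      have hq1 : q.1 = s := by
        rw [List.getLast?_eq_getLast hne] at hlast
        simpa using hlast
      have hqpos : 0 < q.2 := hpos q (List.getLast_mem hne)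
      have hsplit : (ζ.dropLast.map Prod.snd).sum + q.2 = j := by
        rw [← hql] at hsumj; simpa using hsumj
      rcases eq_or_ne ζ.dropLast [] with hdl | hdl
      · left
        rw [hdl] at hql hsplit
        simp only [List.nil_append] at hql
        simp only [List.map_nil, List.sum_nil, zero_add] at hsplit
        rw [← hql]
        rw [show ((s, j) : S × ℕ) = q from by
          ext <;> simp [hq1, hsplit]]
      · right
        have hpos' : ∀ p ∈ ζ.dropLast, 0 < p.2 :=
          fun p hp => hpos p (List.mem_of_mem_dropLast hp)
        have hmpos : 0 < (ζ.dropLast.map Prod.snd).sum := by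
          apply List.sum_pos
          · intro x hx
            obtain ⟨p, hp, rfl⟩ := List.mem_map.1 hx
            exact hpos' p hp
          · intro h
            apply hdl
            rwa [List.map_eq_nil_iff] at h
        refine ⟨j + 1 - q.2, (ζ.dropLast.getLast hdl).1, ⟨by omega, by omega⟩,
          ζ.dropLast, ⟨⟨hdl, hpos', ?_⟩, ?_⟩, ?_⟩
        · omega
        · rw [List.getLast?_eq_getLast hdl]
          simp
        · show ζ.dropLast ++ [(s, j + 1 - (j + 1 - q.2))] = ζ
          rw [show j + 1 - (j + 1 - q.2) = q.2 from by omega]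
          rw [show ((s, q.2) : S × ℕ) = q from by ext <;> simp [hq1]]
          exact hql
    · rintro (rfl | ⟨i, s', ⟨hi2, hij⟩, ζ', ⟨⟨hne', hpos', hsum'⟩, hlast'⟩, rfl⟩)
      · refine ⟨⟨by simp, ?_, ?_⟩, by simp⟩
        · intro p hp; simp at hp; subst hp; simpa using (show 0 < j by omega)
        · simp only [List.map_cons, List.map_nil, List.sum_cons, List.sum_nil]
          omega
      · have hsum'' : (ζ'.map Prod.snd).sum = i - 1 := by simpa using hsum'
        refine ⟨⟨by simp [e], ?_, ?_⟩, ?_⟩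
        · intro p hp
          simp only [e, List.mem_append, List.mem_singleton] at hp
          rcases hp with hp | rfl
          · exact hpos' p hp
          · simp; omega
        · simp only [e, List.map_append, List.sum_append, List.map_cons,
            List.map_nil, List.sum_cons, List.sum_nil, hsum'']
          omega
        · simp only [e, List.getLast?_concat]
          simp
  rw [hfw j s, key]
  have hnotmem : [(s, j)] ∉ (Finset.Icc 2 j ×ˢ (Finset.univ : Finset S)).biUnion
      (fun p => ((seg_finite (p.1 - 1) p.2).toFinset).image (e p.1)) := by
    simp only [Finset.mem_biUnion, Finset.mem_image, not_exists, not_and]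
    rintro p hp ζ' hζ' habs
    rw [Set.Finite.mem_toFinset] at hζ'
    have : ζ'.length + 1 = 1 := by
      have := congrArg List.length habs
      simpa [e] using this
    have := hζ'.1.1
    cases ζ' <;> simp_all
  rw [Finset.sum_insert hnotmem]
  have hdisj : (↑(Finset.Icc 2 j ×ˢ (Finset.univ : Finset S)) :
      Set (ℕ × S)).PairwiseDisjoint
      (fun p => ((seg_finite (p.1 - 1) p.2).toFinset).image (e p.1)) := by
    rintro ⟨i₁, t₁⟩ hp₁ ⟨i₂, t₂⟩ hp₂ hne
    simp only [Finset.coe_product, Set.mem_prod, Finset.mem_coe,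
      Finset.mem_Icc, Finset.mem_univ, and_true] at hp₁ hp₂
    simp only [Function.onFun]
    rw [Finset.disjoint_left]
    rintro ζ h₁ h₂
    simp only [Finset.mem_image] at h₁ h₂
    obtain ⟨ζ₁, hζ₁, rfl⟩ := h₁
    obtain ⟨ζ₂, hζ₂, heq⟩ := h₂
    rw [Set.Finite.mem_toFinset] at hζ₁ hζ₂
    have hlasts := congrArg List.getLast? heq
    simp only [e, List.getLast?_concat, Option.some_inj, Prod.mk.injEq] at hlasts
    have hi : i₂ = i₁ := by omega
    subst hi
    have hζeq : ζ₂ = ζ₁ := (List.append_left_inj _).1 heq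
    subst hζeq
    have h1 := hζ₁.2
    have h2 := hζ₂.2
    rw [h1] at h2
    simp only [Option.some_inj] at h2
    exact hne (by simp [h2])
  rw [Finset.sum_biUnion hdisj]
  rw [Finset.sum_product]
  have hterm : ∀ i ∈ Finset.Icc 2 j, ∀ s' : S,
      (∑ ζ ∈ ((seg_finite (i - 1) s').toFinset).image (e i), segPhi R A 0 ζ)
        = fwdMass R A (i - 1) s' * A s' s (i - 1) * R s i j := by
    intro i hi s'
    rw [Finset.mem_Icc] at hi
    rw [Finset.sum_image (by
      intro a _ b _ hab
      exact (List.append_left_inj _).1 hab)]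
    rw [hfw, Finset.sum_mul, Finset.sum_mul]
    apply Finset.sum_congr rfl
    intro ζ' hζ'
    have hsum'' := hsum_of _ _ _ hζ'
    rw [Set.Finite.mem_toFinset] at hζ'
    obtain ⟨⟨hne', hpos', -⟩, hlast'⟩ := hζ'
    have hget : ζ'.getLast? = some (ζ'.getLast hne') :=
      List.getLast?_eq_getLast hne'
    have hfst : (ζ'.getLast hne').1 = s' := by
      rw [hget] at hlast'; simpa using hlast'
    rw [show (e i ζ' : List (S × ℕ)) = ζ' ++ [(s, j + 1 - i)] from rfl,
      segPhi_append R A ζ' 0 _ s (j + 1 - i) hget, hfst, hsum'']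
    rw [show 0 + (i - 1) = i - 1 from by omega,
      show i - 1 + 1 = i from by omega,
      show i - 1 + (j + 1 - i) = j from by omega]
  rw [Finset.sum_congr rfl (fun i hi => Finset.sum_congr rfl
    (fun s' _ => hterm i hi s'))]
  rw [show segPhi R A 0 [(s, j)] = R s 1 j from by simp [segPhi]]
  ring
end

section
/- The backward mass of the semi-Markov model satisfies the following recursion: for every i with 1 ≤ i ≤ T and every s ∈ S, β_i(s) = Σ_{j=i}^{T-1} Σ_{s' ∈ S} R(s,i,j) · A(s,s',j) · β_{j+1}(s') + R(s,i,T), where the sum over j is empty when i = T. -/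
/-- The backward mass `β_i(s)` of the semi-Markov model: the sum of the joint
potentials of all segmentations of `[i, T]` whose first segment has state `s`. -/
noncomputable def bwdMass {S : Type*} (R : S → ℕ → ℕ → ℝ) (A : S → S → ℕ → ℝ)
    (T : ℕ) (i : ℕ) (s : S) : ℝ :=
  ∑ᶠ ζ ∈ {ζ : List (S × ℕ) |
      IsSegmentation i T ζ ∧ Option.map Prod.fst ζ.head? = some s},
    segPhi R A (i - 1) ζ

open Set

lemma listfin {S : Type*} [Finite S] (n : ℕ) :
    {ζ : List (S × ℕ) | (∀ p ∈ ζ, 0 < p.2) ∧ (ζ.map Prod.snd).sum = n}.Finite := by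
  set A : Set (List (S × ℕ)) :=
    {ζ | (∀ p ∈ ζ, 0 < p.2) ∧ (ζ.map Prod.snd).sum = n} with hA
  have hf : ∀ ζ ∈ A, ∀ p ∈ ζ, p.2 ≤ n := by
    rintro ζ ⟨hpos, hsum⟩ p hp
    have : p.2 ∈ ζ.map Prod.snd := List.mem_map_of_mem hp
    calc p.2 ≤ (ζ.map Prod.snd).sum := List.single_le_sum (by simp) _ this
      _ = n := hsum
  let f : S × ℕ → S × Fin (n + 1) := fun p => (p.1, ⟨p.2 % (n + 1), Nat.mod_lt _ n.succ_pos⟩)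
  have hinj : ∀ (l1 l2 : List (S × ℕ)), (∀ p ∈ l1, p.2 ≤ n) → (∀ p ∈ l2, p.2 ≤ n) →
      l1.map f = l2.map f → l1 = l2 := by
    intro l1
    induction l1 with
    | nil => intro l2 _ _ h; cases l2 <;> simp_all
    | cons a t ih =>
      intro l2 h1 h2 h
      cases l2 with
      | nil => simp_all
      | cons b t2 =>
        simp only [List.map_cons, List.cons.injEq] at h
        have ha : a.2 ≤ n := h1 a (by simp)
        have hb : b.2 ≤ n := h2 b (by simp)
        have h1' : a = b := by
          have := h.1
          simp only [f, Prod.mk.injEq, Fin.mk.injEq] at this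
          have h2 : a.2 % (n+1) = b.2 % (n+1) := this.2
          rw [Nat.mod_eq_of_lt (by omega), Nat.mod_eq_of_lt (by omega)] at h2
          exact Prod.ext this.1 h2
        rw [h1', ih t2 (fun p hp => h1 p (by simp [hp])) (fun p hp => h2 p (by simp [hp])) h.2]
  have hsub : (List.map f '' A) ⊆ {l : List (S × Fin (n+1)) | l.length ≤ n} := by
    rintro _ ⟨ζ, hζ, rfl⟩
    simp only [mem_setOf_eq, List.length_map]
    calc ζ.length = (ζ.map Prod.snd).length := (List.length_map _).symm
      _ ≤ (ζ.map Prod.snd).sum := List.length_le_sum_of_one_le _ (by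
          intro x hx
          obtain ⟨p, hp, rfl⟩ := List.mem_map.mp hx
          exact hζ.1 p hp)
      _ = n := hζ.2
  exact Set.Finite.of_finite_image ((List.finite_length_le _ n).subset hsub)
    (fun l1 h1 l2 h2 h => hinj l1 l2 (hf l1 h1) (hf l2 h2) h)

def SegSet {S : Type*} (T a : ℕ) (s : S) : Set (List (S × ℕ)) :=
  {ζ | IsSegmentation a T ζ ∧ Option.map Prod.fst ζ.head? = some s}

lemma segfin {S : Type*} [Finite S] (T a : ℕ) (s : S) : (SegSet T a s).Finite :=
  (listfin (T + 1 - a)).subset (fun ζ h => ⟨h.1.2.1, h.1.2.2⟩)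

lemma bwdMass_eq {S : Type*} (R : S → ℕ → ℕ → ℝ) (A : S → S → ℕ → ℝ)
    (T i : ℕ) (s : S) :
    bwdMass R A T i s = ∑ᶠ ζ ∈ SegSet T i s, segPhi R A (i - 1) ζ := rfl

lemma seg_decomp {S : Type*} [Fintype S] (T i : ℕ) (hi1 : 1 ≤ i) (hiT : i ≤ T) (s : S) :
    SegSet T i s = {[(s, T + 1 - i)]} ∪
      ⋃ p ∈ (↑(Finset.Icc i (T - 1) ×ˢ (Finset.univ : Finset S)) : Set (ℕ × S)),
        (fun ζ => (s, p.1 + 1 - i) :: ζ) '' SegSet T (p.1 + 1) p.2 := by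
  ext ζ
  constructor
  · rintro ⟨⟨hne, hpos, hsum⟩, hhead⟩
    match ζ with
    | [] => exact absurd rfl hne
    | [(s0, l)] =>
      simp only [List.head?, Option.map_some, Option.some.injEq] at hhead
      subst hhead
      left
      simp only [List.map_cons, List.map_nil, List.sum_cons, List.sum_nil, add_zero] at hsum
      simp [hsum]
    | (s0, l) :: (s', l') :: rest =>
      simp only [List.head?, Option.map_some, Option.some.injEq] at hhead
      subst hhead
      right
      have hl : 0 < l := hpos (s0, l) (by simp)
      have hl' : 0 < l' := hpos (s', l') (by simp)
      simp only [List.map_cons, List.sum_cons] at hsum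
      refine mem_iUnion₂.mpr ⟨(i + l - 1, s'), ?_, (s', l') :: rest, ?_, ?_⟩
      · simp only [Finset.coe_product, mem_prod, Finset.mem_coe, Finset.mem_Icc,
          Finset.mem_univ, and_true]
        omega
      · refine ⟨⟨by simp, fun p hp => hpos p (List.mem_cons_of_mem _ hp), ?_⟩, by simp⟩
        simp only [List.map_cons, List.sum_cons]
        omega
      · simp only
        congr 2
        omega
  · rintro (h | h)
    · simp only [mem_singleton_iff] at h
      subst h
      refine ⟨⟨by simp, by simp; omega, by simp⟩, by simp⟩
    · obtain ⟨p, hp, ζ', hζ', rfl⟩ := mem_iUnion₂.mp h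
      simp only [Finset.coe_product, mem_prod, Finset.mem_coe, Finset.mem_Icc,
        Finset.mem_univ, and_true] at hp
      obtain ⟨⟨hne', hpos', hsum'⟩, hhead'⟩ := hζ'
      refine ⟨⟨by simp, ?_, ?_⟩, ?_⟩
      · rintro q hq
        rcases List.mem_cons.mp hq with rfl | hq
        · simp; omega
        · exact hpos' q hq
      · simp only [List.map_cons, List.sum_cons, hsum']
        omega
      · simp
  done


/-- Backward recursion for the semi-Markov model: for `1 ≤ i ≤ T` and `s ∈ S`,
`β_i(s) = Σ_{j=i}^{T-1} Σ_{s'} R(s,i,j) · A(s,s',j) · β_{j+1}(s') + R(s,i,T)`. -/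
theorem semiCRF_backward_recursion {S : Type*} [Fintype S] [Nonempty S]
    (T : ℕ) (hT : 1 ≤ T)
    (R : S → ℕ → ℕ → ℝ) (A : S → S → ℕ → ℝ)
    (i : ℕ) (hi1 : 1 ≤ i) (hiT : i ≤ T) (s : S) :
    bwdMass R A T i s =
      (∑ j ∈ Finset.Icc i (T - 1), ∑ s' : S,
          R s i j * A s s' j * bwdMass R A T (j + 1) s')
        + R s i T := by
  classical
  rw [bwdMass_eq, seg_decomp T i hi1 hiT s]
  have hdisj : Disjoint ({[(s, T + 1 - i)]} : Set (List (S × ℕ)))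
      (⋃ p ∈ (↑(Finset.Icc i (T - 1) ×ˢ (Finset.univ : Finset S)) : Set (ℕ × S)),
        (fun ζ => (s, p.1 + 1 - i) :: ζ) '' SegSet T (p.1 + 1) p.2) := by
    rw [Set.disjoint_left]
    rintro ζ hζ h2
    simp only [mem_singleton_iff] at hζ
    subst hζ
    obtain ⟨p, _, ζ', hζ', heq⟩ := mem_iUnion₂.mp h2
    have : ζ' = [] := by
      have := congrArg List.tail heq
      simpa using this.symm
    exact hζ'.1.1 this
  have hfin2 : ∀ p ∈ (↑(Finset.Icc i (T - 1) ×ˢ (Finset.univ : Finset S)) : Set (ℕ × S)),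
      ((fun ζ => (s, p.1 + 1 - i) :: ζ) '' SegSet T (p.1 + 1) p.2).Finite :=
    fun p _ => (segfin T (p.1 + 1) p.2).image _
  rw [finsum_mem_union hdisj (finite_singleton _)
    (Set.Finite.biUnion (Finset.finite_toSet _) hfin2)]
  have hpd : (↑(Finset.Icc i (T - 1) ×ˢ (Finset.univ : Finset S)) : Set (ℕ × S)).PairwiseDisjoint
      (fun p => (fun ζ => (s, p.1 + 1 - i) :: ζ) '' SegSet T (p.1 + 1) p.2) := by
    rintro p hp q hq hpq
    simp only [Finset.coe_product, mem_prod, Finset.mem_coe, Finset.mem_Icc,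
      Finset.mem_univ, and_true] at hp hq
    rw [Function.onFun, Set.disjoint_left]
    rintro ζ ⟨ζ1, hζ1, rfl⟩ ⟨ζ2, hζ2, heq⟩
    simp only [List.cons.injEq, Prod.mk.injEq] at heq
    obtain ⟨⟨_, hlen⟩, htail⟩ := heq
    have hfst : q.1 = p.1 := by omega
    have hsnd : q.2 = p.2 := by
      have h1 := hζ1.2
      have h2 := hζ2.2
      rw [htail, h1] at h2
      exact (Option.some.injEq _ _ ▸ h2).symm ▸ rfl
    exact hpq (Prod.ext hfst hsnd).symm
  rw [finsum_mem_biUnion hpd (Finset.finite_toSet _) hfin2,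
    finsum_mem_coe_finset, Finset.sum_product, finsum_mem_singleton, add_comm]
  congr 1
  · apply Finset.sum_congr rfl
    intro j hj
    rw [Finset.mem_Icc] at hj
    apply Finset.sum_congr rfl
    intro s' _
    rw [finsum_mem_image (fun ζ1 _ ζ2 _ h => by simpa using h)]
    have hcong : ∀ ζ ∈ SegSet T (j + 1) s',
        segPhi R A (i - 1) ((s, j + 1 - i) :: ζ) = R s i j * A s s' j * segPhi R A j ζ := by
      rintro ζ ⟨⟨hne, _, _⟩, hhead⟩
      match ζ with
      | [] => exact absurd rfl hne
      | (s'', l') :: rest =>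
        simp only [List.head?, Option.map_some, Option.some.injEq] at hhead
        subst hhead
        have e1 : i - 1 + 1 = i := by omega
        have e2 : i - 1 + (j + 1 - i) = j := by omega
        simp only [segPhi, e1, e2]
    rw [finsum_mem_congr rfl hcong,
      finsum_mem_eq_finite_toFinset_sum _ (segfin T (j + 1) s'), ← Finset.mul_sum,
      ← finsum_mem_eq_finite_toFinset_sum _ (segfin T (j + 1) s'), bwdMass_eq]
    norm_num
  · show segPhi R A (i - 1) [(s, T + 1 - i)] = R s i T
    have e1 : i - 1 + 1 = i := by omega
    have e2 : i - 1 + (T + 1 - i) = T := by omega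
    simp only [segPhi, e1, e2]
end

section
/- In the semi-Markov model, for any fixed time t with 1 ≤ t ≤ T, the partition function decomposes according to the unique segment covering t: Z = Σ_{s ∈ S} Σ_{i=1}^{t} Σ_{j=t}^{T} M(s,i,j), where M(s,i,j) denotes the sum of Φ[ζ] over all segmentations ζ of [1,T] having a segment with state s spanning exactly [i,j]. -/
/-- `HasSegment s i j t0 ζ` : the segmentation `ζ` of an interval starting at
time `t0 + 1` contains a segment with state `s` spanning exactly `[i, j]`. -/
def HasSegment {S : Type*} (s : S) (i j : ℕ) : ℕ → List (S × ℕ) → Prop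
  | _, [] => False
  | t0, (s', l) :: rest =>
      (s' = s ∧ t0 + 1 = i ∧ t0 + l = j) ∨ HasSegment s i j (t0 + l) rest

/-- `segMass R A T s i j` : the sum of the joint potentials of all segmentations
of `[1, T]` having a segment with state `s` spanning exactly `[i, j]`. -/
noncomputable def segMass {S : Type*} (R : S → ℕ → ℕ → ℝ) (A : S → S → ℕ → ℝ)
    (T : ℕ) (s : S) (i j : ℕ) : ℝ :=
  ∑ᶠ ζ ∈ {ζ : List (S × ℕ) | IsSegmentation 1 T ζ ∧ HasSegment s i j 0 ζ},
    segPhi R A 0 ζ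

section Aux
variable {S : Type*}

lemma hasSegment_bounds {s : S} {i j : ℕ} :
    ∀ (ζ : List (S × ℕ)) (t0 : ℕ), (∀ p ∈ ζ, 0 < p.2) → HasSegment s i j t0 ζ →
      t0 + 1 ≤ i ∧ j ≤ t0 + (ζ.map Prod.snd).sum
  | [], t0, _, h => h.elim
  | (s', l) :: rest, t0, hpos, h => by
    simp only [HasSegment] at h
    rcases h with ⟨_, hi, hj⟩ | h
    · refine ⟨hi.le, ?_⟩
      simp only [List.map_cons, List.sum_cons, ← hj]
      omega
    · have := hasSegment_bounds rest (t0 + l) (fun p hp => hpos p (by simp [hp])) h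
      simp only [List.map_cons, List.sum_cons]
      omega

lemma hasSegment_exists {t : ℕ} :
    ∀ (ζ : List (S × ℕ)) (t0 : ℕ), ζ ≠ [] → (∀ p ∈ ζ, 0 < p.2) →
      t0 + 1 ≤ t → t ≤ t0 + (ζ.map Prod.snd).sum →
      ∃ s i j, i ≤ t ∧ t ≤ j ∧ HasSegment s i j t0 ζ
  | [], _, hne, _, _, _ => absurd rfl hne
  | (s, l) :: rest, t0, _, hpos, h1, h2 => by
    by_cases hc : t ≤ t0 + l
    · exact ⟨s, t0 + 1, t0 + l, h1, hc, Or.inl ⟨rfl, rfl, rfl⟩⟩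
    · have hrne : rest ≠ [] := by
        rintro rfl
        simp only [List.map_cons, List.map_nil, List.sum_cons, List.sum_nil] at h2
        omega
      have hrsum : t ≤ (t0 + l) + (rest.map Prod.snd).sum := by
        simp only [List.map_cons, List.sum_cons] at h2; omega
      obtain ⟨s', i, j, hi, hj, hh⟩ := hasSegment_exists rest (t0 + l) hrne
        (fun p hp => hpos p (by simp [hp])) (by omega) hrsum
      exact ⟨s', i, j, hi, hj, Or.inr hh⟩

lemma hasSegment_unique {t : ℕ} {s s' : S} {i j i' j' : ℕ} :
    ∀ (ζ : List (S × ℕ)) (t0 : ℕ), (∀ p ∈ ζ, 0 < p.2) →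
      i ≤ t → t ≤ j → i' ≤ t → t ≤ j' →
      HasSegment s i j t0 ζ → HasSegment s' i' j' t0 ζ →
      s = s' ∧ i = i' ∧ j = j'
  | [], _, _, _, _, _, _, h, _ => h.elim
  | (s₀, l) :: rest, t0, hpos, hi, hj, hi', hj', h, h' => by
    simp only [HasSegment] at h h'
    have hposr : ∀ p ∈ rest, 0 < p.2 := fun p hp => hpos p (by simp [hp])
    rcases h with ⟨he1, he2, he3⟩ | h
    · rcases h' with ⟨he1', he2', he3'⟩ | h'
      · exact ⟨he1.symm.trans he1', he2.symm.trans he2', he3.symm.trans he3'⟩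
      · have := (hasSegment_bounds rest (t0 + l) hposr h').1
        omega
    · rcases h' with ⟨he1', he2', he3'⟩ | h'
      · have := (hasSegment_bounds rest (t0 + l) hposr h).1
        omega
      · exact hasSegment_unique rest (t0 + l) hposr hi hj hi' hj' h h'

lemma segmentations_finite [Finite S] (T : ℕ) :
    {ζ : List (S × ℕ) | IsSegmentation 1 T ζ}.Finite := by
  have hsub : {ζ : List (S × ℕ) | IsSegmentation 1 T ζ} ⊆
      (fun l : List (S × Fin (T + 1)) => l.map (fun p => (p.1, (p.2 : ℕ)))) ''
        {l | l.length ≤ T} := by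
    rintro ζ ⟨hne, hpos, hsum⟩
    have hsum' : (ζ.map Prod.snd).sum = T := by simpa using hsum
    have hb : ∀ p ∈ ζ, p.2 ≤ T := by
      intro p hp
      have : p.2 ≤ (ζ.map Prod.snd).sum := List.le_sum_of_mem (List.mem_map_of_mem (f := Prod.snd) hp)
      omega
    refine ⟨ζ.map (fun p => (p.1, (⟨min p.2 T, by omega⟩ : Fin (T + 1)))), ?_, ?_⟩
    · have hlen : ζ.length ≤ T := by
        have h1 : (ζ.map Prod.snd).length ≤ (ζ.map Prod.snd).sum :=
          List.length_le_sum_of_one_le _ (by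
            intro x hx
            obtain ⟨p, hp, rfl⟩ := List.mem_map.mp hx
            exact hpos p hp)
        simpa [hsum'] using h1
      simpa using hlen
    · dsimp only
      rw [List.map_map]
      calc ζ.map _ = ζ.map id := List.map_congr_left (by
              intro p hp
              have := hb p hp
              simp [Function.comp, min_eq_left this])
        _ = ζ := List.map_id ζ
  exact ((List.finite_length_le _ T).image _).subset hsub

open Classical in
lemma cover_count_one [Fintype S] {t T : ℕ} (ht1 : 1 ≤ t) (htT : t ≤ T)
    (ζ : List (S × ℕ)) (hζ : IsSegmentation 1 T ζ) (c : ℝ) :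
    (∑ s : S, ∑ i ∈ Finset.Icc 1 t, ∑ j ∈ Finset.Icc t T,
      (if HasSegment s i j 0 ζ then c else 0)) = c := by
  classical
  obtain ⟨hne, hpos, hsum⟩ := hζ
  have hsum' : (ζ.map Prod.snd).sum = T := by simpa using hsum
  obtain ⟨s₀, i₀, j₀, hi₀, hj₀, hh₀⟩ := hasSegment_exists (t := t) ζ 0 hne hpos (by omega)
    (by omega)
  have hb₀ := hasSegment_bounds ζ 0 hpos hh₀
  have key : (∑ x ∈ Finset.univ ×ˢ Finset.Icc 1 t ×ˢ Finset.Icc t T,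
      (if HasSegment x.1 x.2.1 x.2.2 0 ζ then c else 0)) = c := by
    rw [Finset.sum_eq_single_of_mem ((s₀, i₀, j₀) : S × ℕ × ℕ)]
    · exact if_pos hh₀
    · simp only [Finset.mem_product, Finset.mem_univ, Finset.mem_Icc, true_and]
      omega
    · rintro ⟨s, i, j⟩ hmem hne'
      simp only [Finset.mem_product, Finset.mem_univ, Finset.mem_Icc, true_and] at hmem
      refine if_neg fun hh => hne' ?_
      obtain ⟨h1, h2, h3⟩ := hasSegment_unique ζ 0 hpos hmem.1.2 hmem.2.1 hi₀ hj₀ hh hh₀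
      simp only [Prod.mk.injEq]
      exact ⟨h1, h2, h3⟩
  simpa only [Finset.sum_product] using key

end Aux

/-- For any fixed time `t` with `1 ≤ t ≤ T`, the partition function of the
semi-Markov model decomposes according to the unique segment covering `t`:
`Z = Σ_{s} Σ_{i=1}^{t} Σ_{j=t}^{T} M(s,i,j)`. -/
theorem semiCRF_partition_function_decomposition {S : Type*} [Fintype S] [Nonempty S]
    (T : ℕ) (hT : 1 ≤ T)
    (R : S → ℕ → ℕ → ℝ) (A : S → S → ℕ → ℝ)
    (t : ℕ) (ht1 : 1 ≤ t) (htT : t ≤ T) :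
    (∑ᶠ ζ ∈ {ζ : List (S × ℕ) | IsSegmentation 1 T ζ}, segPhi R A 0 ζ) =
      ∑ s : S, ∑ i ∈ Finset.Icc 1 t, ∑ j ∈ Finset.Icc t T, segMass R A T s i j := by
  classical
  have hfin := segmentations_finite (S := S) T
  have hmass : ∀ (s : S) (i j : ℕ), segMass R A T s i j =
      ∑ ζ ∈ hfin.toFinset, if HasSegment s i j 0 ζ then segPhi R A 0 ζ else 0 := by
    intro s i j
    have hfin2 : {ζ : List (S × ℕ) | IsSegmentation 1 T ζ ∧ HasSegment s i j 0 ζ}.Finite :=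
      hfin.subset fun ζ h => h.1
    rw [segMass, finsum_mem_eq_finite_toFinset_sum _ hfin2, ← Finset.sum_filter]
    apply Finset.sum_congr _ fun _ _ => rfl
    ext ζ
    simp only [Set.Finite.mem_toFinset, Set.mem_setOf_eq, Finset.mem_filter]
  rw [finsum_mem_eq_finite_toFinset_sum _ hfin]
  simp_rw [hmass]
  calc (∑ ζ ∈ hfin.toFinset, segPhi R A 0 ζ)
      = ∑ ζ ∈ hfin.toFinset, ∑ s : S, ∑ i ∈ Finset.Icc 1 t, ∑ j ∈ Finset.Icc t T,
          (if HasSegment s i j 0 ζ then segPhi R A 0 ζ else 0) := by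
        refine Finset.sum_congr rfl fun ζ hζ => ?_
        rw [cover_count_one ht1 htT ζ (by simpa using hζ)]
    _ = ∑ s : S, ∑ ζ ∈ hfin.toFinset, ∑ i ∈ Finset.Icc 1 t, ∑ j ∈ Finset.Icc t T,
          (if HasSegment s i j 0 ζ then segPhi R A 0 ζ else 0) := Finset.sum_comm
    _ = ∑ s : S, ∑ i ∈ Finset.Icc 1 t, ∑ ζ ∈ hfin.toFinset, ∑ j ∈ Finset.Icc t T,
          (if HasSegment s i j 0 ζ then segPhi R A 0 ζ else 0) :=
        Finset.sum_congr rfl fun _ _ => Finset.sum_comm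
    _ = ∑ s : S, ∑ i ∈ Finset.Icc 1 t, ∑ j ∈ Finset.Icc t T, ∑ ζ ∈ hfin.toFinset,
          (if HasSegment s i j 0 ζ then segPhi R A 0 ζ else 0) :=
        Finset.sum_congr rfl fun _ _ => Finset.sum_congr rfl fun _ _ => Finset.sum_comm
end

section
/- In the semi-Markov model with maximum segment length L ≥ 1, the length-bounded forward mass satisfies: for every j with 1 ≤ j ≤ T and every s ∈ S, α^L_j(s) = Σ_{i = max(2, j−L+1)}^{j} Σ_{s' ∈ S} α^L_{i-1}(s') · A(s',s,i-1) · R(s,i,j) + (if j ≤ L then R(s,1,j) else 0), where α^L_j(s) is the sum of Φ[ζ] over segmentations ζ of [1,j] whose last segment has state s and all of whose segments have length at most L. -/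
/-- The length-bounded forward mass `α^L_j(s)`: the sum of the joint potentials
of all segmentations of `[1, j]` whose last segment has state `s` and all of
whose segments have length at most `L`. -/
noncomputable def fwdMassBounded {S : Type*} (R : S → ℕ → ℕ → ℝ) (A : S → S → ℕ → ℝ)
    (L : ℕ) (j : ℕ) (s : S) : ℝ :=
  ∑ᶠ ζ ∈ {ζ : List (S × ℕ) |
      IsSegmentation 1 j ζ ∧ Option.map Prod.fst ζ.getLast? = some s ∧
        ∀ p ∈ ζ, p.2 ≤ L},
    segPhi R A 0 ζ

lemma segPhi_append_single {S : Type*} (R : S → ℕ → ℕ → ℝ) (A : S → S → ℕ → ℝ)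
    (s : S) (l : ℕ) :
    ∀ (ζ : List (S × ℕ)) (hζ : ζ ≠ []) (t0 : ℕ),
    segPhi R A t0 (ζ ++ [(s, l)]) =
      segPhi R A t0 ζ * A (ζ.getLast hζ).1 s (t0 + (ζ.map Prod.snd).sum) *
        R s (t0 + (ζ.map Prod.snd).sum + 1) (t0 + (ζ.map Prod.snd).sum + l)
  | [], h, _ => absurd rfl h
  | [(a, m)], _, t0 => by
      simp [segPhi, add_assoc]
  | (a, m) :: (b, k) :: rest, _, t0 => by
      have ih := segPhi_append_single R A s l ((b, k) :: rest) (by simp) (t0 + m)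
      simp only [List.cons_append] at ih ⊢
      rw [show segPhi R A t0 ((a,m) :: (b,k) :: (rest ++ [(s,l)])) =
            R a (t0+1) (t0+m) * A a b (t0+m) * segPhi R A (t0+m) ((b,k) :: (rest ++ [(s,l)])) from rfl,
          ih,
          show segPhi R A t0 ((a,m) :: (b,k) :: rest) =
            R a (t0+1) (t0+m) * A a b (t0+m) * segPhi R A (t0+m) ((b,k) :: rest) from rfl]
      rw [show ((a,m) :: (b,k) :: rest).getLast (by simp) = ((b,k) :: rest).getLast (by simp)
            from List.getLast_cons (by simp)]
      simp only [List.map_cons, List.sum_cons, ← add_assoc]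
      ring

lemma length_le_sum' (l : List ℕ) (h : ∀ x ∈ l, 0 < x) : l.length ≤ l.sum := by
  induction l with
  | nil => simp
  | cons a t ih =>
      simp only [List.length_cons, List.sum_cons]
      have h1 := h a (by simp)
      have h2 := ih (fun x hx => h x (by simp [hx]))
      omega

lemma finite_segs {S : Type*} [Fintype S] (n : ℕ) :
    {ζ : List (S × ℕ) | (∀ p ∈ ζ, 0 < p.2) ∧ (ζ.map Prod.snd).sum = n}.Finite := by
  have h1 : {l : List (S × Fin (n + 1)) | l.length ≤ n}.Finite := List.finite_length_le _ n
  apply (h1.image (List.map (fun p : S × Fin (n + 1) => (p.1, (p.2 : ℕ))))).subset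
  rintro ζ ⟨hpos, hsum⟩
  have hmem : ∀ p ∈ ζ, p.2 ≤ n := by
    intro p hp
    have : p.2 ≤ (ζ.map Prod.snd).sum :=
      List.single_le_sum (fun x _ => Nat.zero_le x) _ (List.mem_map.2 ⟨p, hp, rfl⟩)
    omega
  refine ⟨ζ.map (fun p => (p.1, ⟨min p.2 n, by omega⟩)), ?_, ?_⟩
  · simp only [Set.mem_setOf_eq, List.length_map]
    calc ζ.length = (ζ.map Prod.snd).length := by simp
      _ ≤ (ζ.map Prod.snd).sum := length_le_sum' _ (by
            intro x hx; obtain ⟨p, hp, rfl⟩ := List.mem_map.1 hx; exact hpos p hp)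
      _ = n := hsum
  · rw [List.map_map]
    conv_rhs => rw [← List.map_id ζ]
    apply List.map_congr_left
    intro p hp
    have := hmem p hp
    simp [Function.comp, min_eq_left this]

def SegS {S : Type*} (L j : ℕ) (s : S) : Set (List (S × ℕ)) :=
  {ζ : List (S × ℕ) |
      IsSegmentation 1 j ζ ∧ Option.map Prod.fst ζ.getLast? = some s ∧
        ∀ p ∈ ζ, p.2 ≤ L}

lemma fwd_eq_finsum {S : Type*} (R : S → ℕ → ℕ → ℝ) (A : S → S → ℕ → ℝ)
    (L j : ℕ) (s : S) :
    fwdMassBounded R A L j s = ∑ᶠ ζ ∈ SegS L j s, segPhi R A 0 ζ := rfl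

lemma SegS_finite {S : Type*} [Fintype S] (L j : ℕ) (s : S) : (SegS L j s).Finite := by
  apply (finite_segs j).subset
  rintro ζ ⟨⟨hne, hpos, hsum⟩, -, -⟩
  exact ⟨hpos, by simpa using hsum⟩

/-- Length-bounded forward recursion for the semi-Markov model with maximum
segment length `L ≥ 1`: for `1 ≤ j ≤ T` and `s ∈ S`,
`α^L_j(s) = Σ_{i=max(2, j−L+1)}^{j} Σ_{s'} α^L_{i-1}(s') · A(s',s,i-1) · R(s,i,j)
              + (if j ≤ L then R(s,1,j) else 0)`. -/
theorem semiCRF_bounded_forward_recursion {S : Type*} [Fintype S] [Nonempty S]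
    (T L : ℕ) (hT : 1 ≤ T) (hL : 1 ≤ L)
    (R : S → ℕ → ℕ → ℝ) (A : S → S → ℕ → ℝ)
    (j : ℕ) (hj1 : 1 ≤ j) (hjT : j ≤ T) (s : S) :
    fwdMassBounded R A L j s =
      (∑ i ∈ Finset.Icc (max 2 (j + 1 - L)) j, ∑ s' : S,
          fwdMassBounded R A L (i - 1) s' * A s' s (i - 1) * R s i j)
        + (if j ≤ L then R s 1 j else 0) := by
  classical
  set I : Finset ℕ := Finset.Icc (max 2 (j + 1 - L)) j with hI
  set U : Set (List (S × ℕ)) :=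
    ⋃ i ∈ (I : Set ℕ), ⋃ s' : S,
      (fun ζ : List (S × ℕ) => ζ ++ [(s, j + 1 - i)]) '' SegS L (i - 1) s' with hUdef
  set V : Set (List (S × ℕ)) := SegS L j s ∩ {ζ | ζ.length = 1} with hVdef
  -- facts about membership in I
  have hIco : ∀ i ∈ I, 2 ≤ i ∧ i ≤ j ∧ j + 1 - L ≤ i := by
    intro i hi
    simp only [hI, Finset.mem_Icc, le_max_iff, max_le_iff] at hi
    omega
  -- the last-segment decomposition
  have hUV : SegS L j s = U ∪ V := by
    ext ζ
    constructor
    · intro hζ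
      obtain ⟨⟨hne, hpos, hsum⟩, hlast, hle⟩ := hζ
      have hsumj : (ζ.map Prod.snd).sum = j := by simpa using hsum
      by_cases hlen : ζ.length = 1
      · exact Or.inr ⟨⟨⟨hne, hpos, hsum⟩, hlast, hle⟩, hlen⟩
      · left
        have hlen2 : 2 ≤ ζ.length := by
          have : ζ.length ≠ 0 := by simpa using hne
          omega
        set q := ζ.getLast hne with hq
        have hql : ζ.getLast? = some q := List.getLast?_eq_getLast hne
        have hq1 : q.1 = s := by
          rw [hql] at hlast; simpa using hlast
        have hsplit : ζ.dropLast ++ [q] = ζ := List.dropLast_append_getLast hne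
        have hdne : ζ.dropLast ≠ [] := by
          have : ζ.dropLast.length = ζ.length - 1 := (List.length_dropLast : ζ.dropLast.length = ζ.length - 1)
          intro h; rw [h] at this; simp at this; omega
        have hsub : ∀ p ∈ ζ.dropLast, p ∈ ζ := fun p hp => List.dropLast_subset ζ hp
        have hqmem : q ∈ ζ := List.getLast_mem hne
        have hsumsplit : (ζ.dropLast.map Prod.snd).sum + q.2 = j := by
          rw [← hsumj]
          conv_rhs => rw [← hsplit]
          simp
        have hq2pos : 0 < q.2 := hpos q hqmem
        have hq2L : q.2 ≤ L := hle q hqmem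
        have hdsumpos : 1 ≤ (ζ.dropLast.map Prod.snd).sum := by
          have h1 : ζ.dropLast.length ≤ (ζ.dropLast.map Prod.snd).sum := by
            have := length_le_sum' (ζ.dropLast.map Prod.snd) (by
              intro x hx; obtain ⟨p, hp, rfl⟩ := List.mem_map.1 hx; exact hpos p (hsub p hp))
            simpa using this
          have : 1 ≤ ζ.dropLast.length := by
            have := (List.length_dropLast : ζ.dropLast.length = ζ.length - 1); omega
          omega
        set i := j + 1 - q.2 with hi2
        have hiI : i ∈ I := by
          simp only [hI, Finset.mem_Icc, max_le_iff]
          omega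
        have hil : j + 1 - i = q.2 := by omega
        have hdsum : (ζ.dropLast.map Prod.snd).sum = i - 1 := by omega
        have hdl : ζ.dropLast.getLast? = some (ζ.dropLast.getLast hdne) :=
          List.getLast?_eq_getLast hdne
        refine Set.mem_iUnion₂.2 ⟨i, hiI, Set.mem_iUnion.2 ⟨(ζ.dropLast.getLast hdne).1,
          ⟨ζ.dropLast, ⟨⟨hdne, fun p hp => hpos p (hsub p hp), by
              simpa using hdsum⟩, by rw [hdl]; rfl, fun p hp => hle p (hsub p hp)⟩, ?_⟩⟩⟩
        show ζ.dropLast ++ [(s, j + 1 - i)] = ζ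
        rw [hil, ← hq1]
        exact hsplit
    · rintro (hU | hV)
      · obtain ⟨i, hiI, hU⟩ := Set.mem_iUnion₂.1 hU
        obtain ⟨s', ζ', ⟨⟨hne', hpos', hsum'⟩, hlast', hle'⟩, rfl⟩ := Set.mem_iUnion.1 hU
        obtain ⟨hi2, hij, hiL⟩ := hIco i hiI
        have hsum'' : (ζ'.map Prod.snd).sum = i - 1 := by simpa using hsum'
        refine ⟨⟨by simp, ?_, ?_⟩, ?_, ?_⟩
        · intro p hp
          rcases List.mem_append.1 hp with h | h
          · exact hpos' p h
          · simp at h; rw [h]; simp; omega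
        · simp [hsum'']; omega
        · rw [List.getLast?_concat]; rfl
        · intro p hp
          rcases List.mem_append.1 hp with h | h
          · exact hle' p h
          · simp at h; rw [h]; simp; omega
      · exact hV.1
  have hdisj : Disjoint U V := by
    rw [Set.disjoint_left]
    rintro ζ hU ⟨-, hlen⟩
    obtain ⟨i, -, hU⟩ := Set.mem_iUnion₂.1 hU
    obtain ⟨s', ζ', hζ', rfl⟩ := Set.mem_iUnion.1 hU
    have : ζ' ≠ [] := hζ'.1.1
    simp only [Set.mem_setOf_eq, List.length_append, List.length_cons, List.length_nil] at hlen
    have : ζ'.length ≠ 0 := by simpa using this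
    omega
  have hinner_fin : ∀ (i : ℕ) (s' : S),
      ((fun ζ : List (S × ℕ) => ζ ++ [(s, j + 1 - i)]) '' SegS L (i - 1) s').Finite :=
    fun i s' => (SegS_finite L (i - 1) s').image _
  have hUfin : U.Finite :=
    (I.finite_toSet).biUnion fun i _ => Set.finite_iUnion fun s' => hinner_fin i s'
  have hVfin : V.Finite := ((SegS_finite L j s).inter_of_left _)
  rw [fwd_eq_finsum, hUV, finsum_mem_union hdisj hUfin hVfin]
  congr 1
  · -- the union part
    have hpd : (I : Set ℕ).PairwiseDisjoint
        (fun i => ⋃ s' : S, (fun ζ : List (S × ℕ) => ζ ++ [(s, j + 1 - i)]) ''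
          SegS L (i - 1) s') := by
      intro i hi i' hi' hne
      rw [Function.onFun, Set.disjoint_left]
      rintro ζ h1 h2
      obtain ⟨s1, ζ1, -, h1⟩ := Set.mem_iUnion.1 h1
      obtain ⟨s2, ζ2, -, h2⟩ := Set.mem_iUnion.1 h2
      have e1 : ζ.getLast? = some (s, j + 1 - i) := by rw [← h1]; exact List.getLast?_concat
      have e2 : ζ.getLast? = some (s, j + 1 - i') := by rw [← h2]; exact List.getLast?_concat
      rw [e1] at e2
      have : j + 1 - i = j + 1 - i' := by simpa using e2
      obtain ⟨-, hij, -⟩ := hIco i (by exact_mod_cast hi)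
      obtain ⟨-, hij', -⟩ := hIco i' (by exact_mod_cast hi')
      exact hne (by omega)
    rw [finsum_mem_biUnion hpd I.finite_toSet
        (fun i _ => Set.finite_iUnion fun s' => hinner_fin i s'),
      finsum_mem_coe_finset]
    apply Finset.sum_congr rfl
    intro i hiI
    obtain ⟨hi2, hij, hiL⟩ := hIco i hiI
    have hpd' : Pairwise (Function.onFun Disjoint fun s' : S =>
        (fun ζ : List (S × ℕ) => ζ ++ [(s, j + 1 - i)]) '' SegS L (i - 1) s') := by
      intro s1 s2 hne
      rw [Function.onFun, Set.disjoint_left]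
      rintro ζ h1 h2
      obtain ⟨ζ1, hζ1, e1⟩ := h1
      obtain ⟨ζ2, hζ2, e2⟩ := h2
      have : ζ1 = ζ2 := List.append_left_injective _ (by rw [e1, e2])
      subst this
      have l1 := hζ1.2.1
      have l2 := hζ2.2.1
      rw [l1] at l2
      exact hne (by simpa using l2)
    rw [finsum_mem_iUnion hpd' (fun s' => hinner_fin i s'), finsum_eq_sum_of_fintype]
    apply Finset.sum_congr rfl
    intro s' _
    have hinj : Set.InjOn (fun ζ : List (S × ℕ) => ζ ++ [(s, j + 1 - i)]) (SegS L (i - 1) s') :=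
      fun a _ b _ h => List.append_left_injective _ h
    rw [finsum_mem_image hinj]
    have hcong : ∀ ζ' ∈ SegS L (i - 1) s',
        segPhi R A 0 (ζ' ++ [(s, j + 1 - i)]) =
          segPhi R A 0 ζ' * (A s' s (i - 1) * R s i j) := by
      intro ζ' hζ'
      obtain ⟨⟨hne', hpos', hsum'⟩, hlast', hle'⟩ := hζ'
      have hsum'' : (ζ'.map Prod.snd).sum = i - 1 := by simpa using hsum'
      have hl : ζ'.getLast? = some (ζ'.getLast hne') := List.getLast?_eq_getLast hne'
      have hfst : (ζ'.getLast hne').1 = s' := by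
        rw [hl] at hlast'; simpa using hlast'
      rw [segPhi_append_single R A s (j + 1 - i) ζ' hne' 0, hsum'', hfst]
      have e1 : 0 + (i - 1) = i - 1 := by omega
      have e2 : i - 1 + 1 = i := by omega
      have e3 : i - 1 + (j + 1 - i) = j := by omega
      rw [e1, e2, e3, mul_assoc]
    rw [finsum_mem_congr rfl hcong, fwd_eq_finsum,
      finsum_mem_eq_finite_toFinset_sum _ (SegS_finite L (i - 1) s'),
      finsum_mem_eq_finite_toFinset_sum _ (SegS_finite L (i - 1) s'),
      ← Finset.sum_mul, mul_assoc]
  · -- the singleton part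
    by_cases hjL : j ≤ L
    · rw [if_pos hjL]
      have hVeq : V = {[(s, j)]} := by
        ext ζ
        constructor
        · rintro ⟨⟨⟨hne, hpos, hsum⟩, hlast, hle⟩, hlen⟩
          obtain ⟨p, rfl⟩ := List.length_eq_one_iff.1 hlen
          have hp2 : p.2 = j := by simpa using hsum
          have hp1 : p.1 = s := by simpa using hlast
          simp [← hp1, ← hp2]
        · rintro rfl
          refine ⟨⟨⟨by simp, by simp; omega, by simp⟩, by simp, by simp; omega⟩, by simp⟩
      rw [hVeq, finsum_mem_singleton]
      show R s (0 + 1) (0 + j) = R s 1 j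
      norm_num
    · rw [if_neg hjL]
      have hVeq : V = ∅ := by
        ext ζ
        simp only [Set.mem_empty_iff_false, iff_false]
        rintro ⟨⟨⟨hne, hpos, hsum⟩, hlast, hle⟩, hlen⟩
        obtain ⟨p, rfl⟩ := List.length_eq_one_iff.1 hlen
        have hp2 : p.2 = j := by simpa using hsum
        have := hle p (by simp)
        omega
      rw [hVeq, finsum_mem_empty]
end

section
/- Gradient of the log-likelihood of a log-linear (conditional random field) model over a finite space: for every weight vector w : Fin n → ℝ and every coordinate k, the function t ↦ L(w + t·e_k) (where e_k is the k-th standard basis vector) is differentiable at t = 0 with derivative Σ_{x ∈ X} Q(x)·F(x)_k − Σ_{x ∈ X} P_w(x)·F(x)_k, i.e. the derivative equals the empirical expectation of the k-th feature minus its model expectation. -/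
/-- Gradient of the log-likelihood of a log-linear (CRF) model over a finite
space: for every weight vector `w` and coordinate `k`, the map
`t ↦ L(w + t·e_k)` is differentiable at `t = 0` with derivative equal to the
empirical expectation of the `k`-th feature minus its model expectation,
`Σ_x Q(x)·F(x)_k − Σ_x P_w(x)·F(x)_k`. -/
theorem logLinear_logLikelihood_gradient
    {X : Type*} [Fintype X] [Nonempty X]
    (n : ℕ) (hn : 1 ≤ n)
    (F : X → Fin n → ℝ) (Q : X → ℝ)
    (hQ0 : ∀ x, 0 ≤ Q x) (hQ1 : ∑ x : X, Q x = 1)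
    (w : Fin n → ℝ) (k : Fin n) :
    HasDerivAt
      (fun t : ℝ =>
        ∑ x : X, Q x *
          Real.log
            (Real.exp (∑ i : Fin n, (w i + t * (if i = k then (1 : ℝ) else 0)) * F x i) /
              ∑ y : X, Real.exp (∑ i : Fin n, (w i + t * (if i = k then (1 : ℝ) else 0)) * F y i)))
      ((∑ x : X, Q x * F x k) -
        ∑ x : X,
          (Real.exp (∑ i : Fin n, w i * F x i) /
            ∑ y : X, Real.exp (∑ i : Fin n, w i * F y i)) * F x k)
      0 := by
  set S : X → ℝ := fun x => ∑ i : Fin n, w i * F x i with hS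
  have key : ∀ (t : ℝ) (x : X),
      ∑ i : Fin n, (w i + t * (if i = k then (1 : ℝ) else 0)) * F x i = S x + t * F x k := by
    intro t x
    simp [add_mul, Finset.sum_add_distrib, mul_ite, ite_mul, mul_assoc, hS]
  have Zpos : ∀ t : ℝ, 0 < ∑ y : X, Real.exp (S y + t * F y k) := by
    intro t
    exact Finset.sum_pos (fun y _ => Real.exp_pos _) Finset.univ_nonempty
  have funeq : (fun t : ℝ =>
        ∑ x : X, Q x *
          Real.log
            (Real.exp (∑ i : Fin n, (w i + t * (if i = k then (1 : ℝ) else 0)) * F x i) /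
              ∑ y : X, Real.exp (∑ i : Fin n, (w i + t * (if i = k then (1 : ℝ) else 0)) * F y i)))
      = fun t : ℝ => (∑ x : X, Q x * (S x + t * F x k))
          - Real.log (∑ y : X, Real.exp (S y + t * F y k)) := by
    funext t
    have : ∀ x : X, Q x * Real.log
        (Real.exp (∑ i : Fin n, (w i + t * (if i = k then (1 : ℝ) else 0)) * F x i) /
          ∑ y : X, Real.exp (∑ i : Fin n, (w i + t * (if i = k then (1 : ℝ) else 0)) * F y i))
        = Q x * (S x + t * F x k) - Q x * Real.log (∑ y : X, Real.exp (S y + t * F y k)) := by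
      intro x
      simp only [key]
      rw [Real.log_div (Real.exp_ne_zero _) (ne_of_gt (Zpos t)), Real.log_exp, mul_sub]
    rw [Finset.sum_congr rfl (fun x _ => this x), Finset.sum_sub_distrib,
      ← Finset.sum_mul, hQ1, one_mul]
  rw [funeq]
  set Z : ℝ := ∑ y : X, Real.exp (S y) with hZ
  have hZ0 : (∑ y : X, Real.exp (S y + (0:ℝ) * F y k)) = Z := by simp [hZ]
  have hZne : Z ≠ 0 := by
    rw [← hZ0]; exact ne_of_gt (Zpos 0)
  have h1 : HasDerivAt (fun t : ℝ => ∑ x : X, Q x * (S x + t * F x k))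
      (∑ x : X, Q x * F x k) 0 := by
    apply HasDerivAt.fun_sum
    intro x _
    simpa using (((hasDerivAt_id (0:ℝ)).mul_const (F x k)).const_add (S x)).const_mul (Q x)
  have hZder : HasDerivAt (fun t : ℝ => ∑ y : X, Real.exp (S y + t * F y k))
      (∑ y : X, Real.exp (S y) * F y k) 0 := by
    apply HasDerivAt.fun_sum
    intro y _
    have : HasDerivAt (fun t : ℝ => S y + t * F y k) (F y k) 0 := by
      simpa using ((hasDerivAt_id (0:ℝ)).mul_const (F y k)).const_add (S y)
    simpa using this.exp
  have h2 : HasDerivAt (fun t : ℝ => Real.log (∑ y : X, Real.exp (S y + t * F y k)))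
      ((∑ y : X, Real.exp (S y) * F y k) / Z) 0 := by
    have := hZder.log (by rw [hZ0]; exact hZne)
    simpa [hZ0] using this
  have := h1.sub h2
  convert this using 1
  · rfl
  · rfl
  · rfl
  rw [Finset.sum_div]
  congr 1
  exact Finset.sum_congr rfl fun x _ => by rw [div_mul_eq_mul_div]
end
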